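/- For any real α, positive integers m and k, and all real x: (L_{m,m+k}^{III,α}(x))' / L_m^{-α-1}(-x) = -x·L_{k-3}^{α+3}(x) + (α+2-x)·L_{k-2}^{α+2}(x) + (m+1)·L_{k-1}^{α+1}(x), valid at all x where L_m^{-α-1}(-x) ≠ 0; equivalently, (L_{m,m+k}^{III,α}(x))' = [-x·L_{k-3}^{α+3}(x) + (α+2-x)·L_{k-2}^{α+2}(x) + (m+1)·L_{k-1}^{α+1}(x)]·L_m^{-α-1}(-x) as an identity of polynomials. -/

import Mathlib

open Finset

/-- Generalized Laguerre polynomial `L_n^α(x) = ∑_{k=0}^n (-1)^k binom(n+α, n-k) x^k / k!`. -/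
noncomputable def lag (α : ℝ) (n : ℕ) (x : ℝ) : ℝ :=
  ∑ k ∈ Finset.range (n + 1),
    (-1 : ℝ) ^ k * (∏ j ∈ Finset.range (n - k), (α + (k : ℝ) + 1 + (j : ℝ))) /
      ((Nat.factorial (n - k) : ℝ) * (Nat.factorial k : ℝ)) * x ^ k

/-- Generalized Laguerre polynomial with integer index, with the convention
`L_n^α := 0` for `n < 0`. -/
noncomputable def lagZ (α : ℝ) (n : ℤ) (x : ℝ) : ℝ :=
  if 0 ≤ n then lag α n.toNat x else 0


lemma lag_zero (α x : ℝ) : lag α 0 x = 1 := by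
  simp [lag]

lemma lagZ_coe (α : ℝ) (n : ℕ) (x : ℝ) : lagZ α (n : ℤ) x = lag α n x := by
  rw [lagZ, if_pos (Int.natCast_nonneg n), Int.toNat_natCast]

lemma hasDerivAt_lag (α : ℝ) (n : ℕ) (x : ℝ) :
    HasDerivAt (lag α n) (-(lagZ (α + 1) ((n : ℤ) - 1) x)) x := by
  have h : HasDerivAt (lag α n)
      (∑ k ∈ Finset.range (n + 1),
        (-1 : ℝ) ^ k * (∏ j ∈ Finset.range (n - k), (α + (k : ℝ) + 1 + (j : ℝ))) /
          ((Nat.factorial (n - k) : ℝ) * (Nat.factorial k : ℝ)) * ((k : ℝ) * x ^ (k - 1))) x := by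
    unfold lag
    exact HasDerivAt.fun_sum fun k _ => (hasDerivAt_pow k x).const_mul _
  convert h using 1
  cases n with
  | zero => simp [lagZ]
  | succ n =>
    have hz : lagZ (α + 1) (((n : ℕ) + 1 : ℕ) - 1 : ℤ) x = lag (α + 1) n x := by
      simp [lagZ]
    rw [hz]
    rw [Finset.sum_range_succ' (fun k =>
      (-1 : ℝ) ^ k * (∏ j ∈ Finset.range (n + 1 - k), (α + (k : ℝ) + 1 + (j : ℝ))) /
        ((Nat.factorial (n + 1 - k) : ℝ) * (Nat.factorial k : ℝ)) * ((k : ℝ) * x ^ (k - 1)))]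
    simp only [Nat.cast_zero, zero_mul, mul_zero, add_zero]
    unfold lag
    rw [neg_eq_iff_eq_neg, ← Finset.sum_neg_distrib]
    apply Finset.sum_congr rfl
    intro i _
    have h1 : n + 1 - (i + 1) = n - i := by omega
    rw [h1]
    have h2 : (∏ j ∈ Finset.range (n - i), (α + ((i : ℝ) + 1) + 1 + (j : ℝ)))
        = ∏ j ∈ Finset.range (n - i), (α + 1 + (i : ℝ) + 1 + (j : ℝ)) := by
      apply Finset.prod_congr rfl; intro j _; ring
    have hf : (Nat.factorial (i + 1) : ℝ) = ((i : ℝ) + 1) * Nat.factorial i := by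
      rw [Nat.factorial_succ]; push_cast; ring
    push_cast [hf]
    rw [h2]
    have hfi : (Nat.factorial i : ℝ) ≠ 0 := Nat.cast_ne_zero.2 (Nat.factorial_ne_zero i)
    have hfd : (Nat.factorial (n - i) : ℝ) ≠ 0 := Nat.cast_ne_zero.2 (Nat.factorial_ne_zero _)
    field_simp
    ring

lemma lag_L2 (α x : ℝ) (n : ℕ) :
    lag α (n + 1) x = lag (α + 1) (n + 1) x - lag (α + 1) n x := by
  unfold lag
  rw [Finset.sum_range_succ, Finset.sum_range_succ
    (fun k => (-1 : ℝ) ^ k * (∏ j ∈ Finset.range (n + 1 - k), (α + 1 + (k : ℝ) + 1 + (j : ℝ))) /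
      ((Nat.factorial (n + 1 - k) : ℝ) * (Nat.factorial k : ℝ)) * x ^ k)]
  have htop : ((-1 : ℝ) ^ (n + 1) * (∏ j ∈ Finset.range (n + 1 - (n + 1)), (α + ((n : ℝ) + 1) + 1 + (j : ℝ))) /
      ((Nat.factorial (n + 1 - (n + 1)) : ℝ) * (Nat.factorial (n + 1) : ℝ)) * x ^ (n + 1))
      = ((-1 : ℝ) ^ (n + 1) * (∏ j ∈ Finset.range (n + 1 - (n + 1)), (α + 1 + ((n : ℝ) + 1) + 1 + (j : ℝ))) /
      ((Nat.factorial (n + 1 - (n + 1)) : ℝ) * (Nat.factorial (n + 1) : ℝ)) * x ^ (n + 1)) := by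
    simp
  push_cast at htop ⊢
  rw [htop]
  have hmain : ∀ i ∈ Finset.range (n + 1),
      ((-1 : ℝ) ^ i * (∏ j ∈ Finset.range (n + 1 - i), (α + (i : ℝ) + 1 + (j : ℝ))) /
        ((Nat.factorial (n + 1 - i) : ℝ) * (Nat.factorial i : ℝ)) * x ^ i)
      = ((-1 : ℝ) ^ i * (∏ j ∈ Finset.range (n + 1 - i), (α + 1 + (i : ℝ) + 1 + (j : ℝ))) /
        ((Nat.factorial (n + 1 - i) : ℝ) * (Nat.factorial i : ℝ)) * x ^ i)
      - ((-1 : ℝ) ^ i * (∏ j ∈ Finset.range (n - i), (α + 1 + (i : ℝ) + 1 + (j : ℝ))) /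
        ((Nat.factorial (n - i) : ℝ) * (Nat.factorial i : ℝ)) * x ^ i) := by
    intro i hi
    rw [Finset.mem_range] at hi
    have hi' : i ≤ n := by omega
    have hd : n + 1 - i = (n - i) + 1 := by omega
    rw [hd]
    have hP1 : (∏ j ∈ Finset.range ((n - i) + 1), (α + (i : ℝ) + 1 + (j : ℝ)))
        = (∏ j ∈ Finset.range (n - i), (α + 1 + (i : ℝ) + 1 + (j : ℝ))) * (α + (i : ℝ) + 1) := by
      rw [Finset.prod_range_succ']
      congr 1
      · apply Finset.prod_congr rfl; intro j _; push_cast; ring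
      · norm_num
    have hP2 : (∏ j ∈ Finset.range ((n - i) + 1), (α + 1 + (i : ℝ) + 1 + (j : ℝ)))
        = (∏ j ∈ Finset.range (n - i), (α + 1 + (i : ℝ) + 1 + (j : ℝ))) * (α + 1 + (i : ℝ) + 1 + ((n : ℝ) - (i : ℝ))) := by
      rw [Finset.prod_range_succ]
      congr 2
      rw [Nat.cast_sub hi']
    rw [hP1, hP2]
    have hfd : (Nat.factorial ((n - i) + 1) : ℝ) = ((n : ℝ) - (i : ℝ) + 1) * Nat.factorial (n - i) := by
      rw [Nat.factorial_succ]
      have h3 : ((n - i : ℕ) : ℝ) = (n : ℝ) - (i : ℝ) := by rw [Nat.cast_sub hi']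
      push_cast
      rw [h3]
    rw [hfd]
    have hfi : (Nat.factorial i : ℝ) ≠ 0 := Nat.cast_ne_zero.2 (Nat.factorial_ne_zero i)
    have hfd2 : (Nat.factorial (n - i) : ℝ) ≠ 0 := Nat.cast_ne_zero.2 (Nat.factorial_ne_zero _)
    have hd2 : ((n : ℝ) - (i : ℝ) + 1) ≠ 0 := by
      have : (i : ℝ) ≤ (n : ℝ) := by exact_mod_cast hi'
      nlinarith
    field_simp
    ring
  rw [Finset.sum_congr rfl hmain, Finset.sum_sub_distrib]
  push_cast
  ring


noncomputable def Pr (γ : ℝ) (d : ℕ) : ℝ := ∏ j ∈ Finset.range d, (γ + (j : ℝ))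

lemma Pr_zero (γ : ℝ) : Pr γ 0 = 1 := by simp [Pr]

lemma Pr_top (γ : ℝ) (d : ℕ) : Pr γ (d + 1) = Pr γ d * (γ + (d : ℝ)) := Finset.prod_range_succ _ _

lemma Pr_bot (γ : ℝ) (d : ℕ) : Pr γ (d + 1) = γ * Pr (γ + 1) d := by
  unfold Pr
  rw [Finset.prod_range_succ']
  have e : ∀ j ∈ Finset.range d, (γ + ((j : ℕ) + 1 : ℕ)) = (γ + 1 + (j : ℝ)) := by
    intro j _; push_cast; ring
  rw [Finset.prod_congr rfl e]
  push_cast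
  ring

lemma lag_eq (α : ℝ) (n : ℕ) (x : ℝ) :
    lag α n x = ∑ k ∈ Finset.range (n + 1),
      (-1 : ℝ) ^ k * Pr (α + (k : ℝ) + 1) (n - k) /
        ((Nat.factorial (n - k) : ℝ) * (Nat.factorial k : ℝ)) * x ^ k := rfl

lemma lag_L3 (β x : ℝ) (n : ℕ) :
    ((n : ℝ) + 1) * lag β (n + 1) x = (β + 1) * lag (β + 1) n x - x * lag (β + 2) n x := by
  have hA : ((n : ℝ) + 1) * lag β (n + 1) x
      = ∑ k ∈ Finset.range (n + 2),
        (((n : ℝ) + 1) * ((-1 : ℝ) ^ k * Pr (β + (k : ℝ) + 1) (n + 1 - k) /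
          ((Nat.factorial (n + 1 - k) : ℝ) * (Nat.factorial k : ℝ)))) * x ^ k := by
    rw [lag_eq, Finset.mul_sum]
    apply Finset.sum_congr rfl
    intro k _; ring
  have hB : (β + 1) * lag (β + 1) n x
      = ∑ k ∈ Finset.range (n + 2),
        (if k ≤ n then (β + 1) * ((-1 : ℝ) ^ k * Pr (β + 1 + (k : ℝ) + 1) (n - k) /
          ((Nat.factorial (n - k) : ℝ) * (Nat.factorial k : ℝ))) else 0) * x ^ k := by
    rw [Finset.sum_range_succ, if_neg (by omega), zero_mul, add_zero]
    rw [lag_eq, Finset.mul_sum]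
    apply Finset.sum_congr rfl
    intro k hk
    rw [Finset.mem_range] at hk
    rw [if_pos (by omega)]
    ring
  have hC : x * lag (β + 2) n x
      = ∑ k ∈ Finset.range (n + 2),
        (if k = 0 then 0 else ((-1 : ℝ) ^ (k - 1) * Pr (β + 2 + ((k : ℝ) - 1) + 1) (n - (k - 1)) /
          ((Nat.factorial (n - (k - 1)) : ℝ) * (Nat.factorial (k - 1) : ℝ)))) * x ^ k := by
    rw [Finset.sum_range_succ' (fun k =>
      (if k = 0 then 0 else ((-1 : ℝ) ^ (k - 1) * Pr (β + 2 + ((k : ℝ) - 1) + 1) (n - (k - 1)) /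
        ((Nat.factorial (n - (k - 1)) : ℝ) * (Nat.factorial (k - 1) : ℝ)))) * x ^ k)]
    simp only [if_true, eq_self_iff_true, zero_mul, add_zero]
    rw [lag_eq, Finset.mul_sum]
    apply Finset.sum_congr rfl
    intro k _
    rw [if_neg (Nat.succ_ne_zero k), Nat.succ_sub_one]
    have h1 : (β + 2 + (((k : ℕ) + 1 : ℕ) - 1 : ℝ) + 1) = (β + 2 + (k : ℝ) + 1) := by push_cast; ring
    rw [h1]
    ring
  rw [hA, hB, hC, ← Finset.sum_sub_distrib]
  apply Finset.sum_congr rfl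
  intro k hk
  rw [Finset.mem_range] at hk
  rw [← sub_mul]
  congr 1
  rcases k with _ | i
  · rw [if_pos rfl, if_pos (by omega), sub_zero]
    simp only [Nat.sub_zero, pow_zero, one_mul, Nat.cast_zero, add_zero, Nat.factorial_zero,
      Nat.cast_one, mul_one]
    rw [show (n + 1 : ℕ) = n + 1 from rfl, Pr_bot]
    rw [show (β + 1 + 1 : ℝ) = β + 1 + 0 + 1 by ring]
    rw [Nat.factorial_succ]
    have h1 : (Nat.factorial n : ℝ) ≠ 0 := Nat.cast_ne_zero.2 (Nat.factorial_ne_zero n)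
    have h2 : ((n : ℝ) + 1) ≠ 0 := by positivity
    push_cast
    field_simp
  · rw [if_neg (Nat.succ_ne_zero i), Nat.succ_sub_one]
    have hi : i ≤ n := by omega
    rcases Nat.lt_or_ge i n with hin | hin
    · -- main bulk case : i < n
      rw [if_pos (by omega)]
      have hd1 : n + 1 - (i + 1) = (n - i - 1) + 1 := by omega
      have hd2 : n - (i + 1) = n - i - 1 := by omega
      have hd3 : n - i = (n - i - 1) + 1 := by omega
      set d : ℕ := n - i - 1 with hdd
      have hdr : (d : ℝ) = (n : ℝ) - (i : ℝ) - 1 := by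
        rw [hdd, Nat.sub_sub, Nat.cast_sub (by omega)]; push_cast; ring
      rw [hd1, hd2, hd3]
      have hg1 : (β + ((i : ℕ) + 1 : ℕ) + 1 : ℝ) = β + (i : ℝ) + 2 := by push_cast; ring
      have hg2 : (β + 1 + ((i : ℕ) + 1 : ℕ) + 1 : ℝ) = β + (i : ℝ) + 3 := by push_cast; ring
      have hg3 : (β + 2 + (((i : ℕ) + 1 : ℕ) - 1 : ℝ) + 1 : ℝ) = β + (i : ℝ) + 3 := by push_cast; ring
      rw [hg1, hg2, hg3, Pr_bot, show (β + (i : ℝ) + 2 + 1) = β + (i : ℝ) + 3 by ring, Pr_top]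
      have hfd : (Nat.factorial (d + 1) : ℝ) = ((d : ℝ) + 1) * Nat.factorial d := by
        rw [Nat.factorial_succ]; push_cast; ring
      have hfi : (Nat.factorial (i + 1) : ℝ) = ((i : ℝ) + 1) * Nat.factorial i := by
        rw [Nat.factorial_succ]; push_cast; ring
      rw [hfd, hfi]
      have h1 : (Nat.factorial d : ℝ) ≠ 0 := Nat.cast_ne_zero.2 (Nat.factorial_ne_zero d)
      have h2 : (Nat.factorial i : ℝ) ≠ 0 := Nat.cast_ne_zero.2 (Nat.factorial_ne_zero i)
      have h3 : ((d : ℝ) + 1) ≠ 0 := by positivity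
      have h4 : ((i : ℝ) + 1) ≠ 0 := by positivity
      rw [pow_succ]
      field_simp
      rw [hdr]
      ring
    · -- top case : i = n
      have hieq : i = n := le_antisymm hi hin
      subst hieq
      rw [if_neg (by omega)]
      rw [show i + 1 - (i + 1) = 0 from by omega, show i - i = 0 from by omega]
      rw [Pr_zero, Pr_zero]
      simp only [Nat.factorial_zero, Nat.cast_one, one_mul, mul_one]
      have hfi : (Nat.factorial (i + 1) : ℝ) = ((i : ℝ) + 1) * Nat.factorial i := by
        rw [Nat.factorial_succ]; push_cast; ring
      rw [hfi, pow_succ]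
      have h2 : (Nat.factorial i : ℝ) ≠ 0 := Nat.cast_ne_zero.2 (Nat.factorial_ne_zero i)
      have h4 : ((i : ℝ) + 1) ≠ 0 := by positivity
      field_simp
      ring

lemma lag_KI (α x : ℝ) (m : ℕ) :
    ((m : ℝ) + 2) * lag (-α - 2) (m + 1 + 1) x
      = (-α - 1 - x) * lag (-α - 1) (m + 1) x - x * lag (-α) m x := by
  have h3 := lag_L3 (-α - 2) x (m + 1)
  have h2 := lag_L2 (-α - 1) x m
  rw [show (-α - 2 + 1 : ℝ) = -α - 1 by ring, show (-α - 2 + 2 : ℝ) = -α by ring] at h3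
  rw [show (-α - 1 + 1 : ℝ) = -α by ring] at h2
  push_cast at h3
  linear_combination h3 + x * h2

lemma hasDerivAt_lag_neg (β : ℝ) (n : ℕ) (x : ℝ) :
    HasDerivAt (fun y => lag β n (-y)) (lagZ (β + 1) ((n : ℤ) - 1) (-x)) x := by
  have h := (hasDerivAt_lag β n (-x)).comp x (hasDerivAt_neg x)
  simpa [Function.comp_def] using h

/-- The Type III exceptional `X_m`-Laguerre polynomial of degree `m + k` (for `k ≥ 1`):
`L_{m,m+k}^{III,α}(x) = x L_{k-2}^{α+2}(x) L_m^{-α-1}(-x) + (m+1) L_{k-1}^{α+1}(x) L_{m+1}^{-α-2}(-x)`. -/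
noncomputable def LIII (α : ℝ) (m k : ℕ) (x : ℝ) : ℝ :=
  x * lagZ (α + 2) ((k : ℤ) - 2) x * lag (-α - 1) m (-x)
    + ((m : ℝ) + 1) * lag (α + 1) (k - 1) x * lag (-α - 2) (m + 1) (-x)

/-- key derivative identity
`(L_{m,m+k}^{III,α}(x))' = (-x L_{k-3}^{α+3}(x) + (α+2-x) L_{k-2}^{α+2}(x)
  + (m+1) L_{k-1}^{α+1}(x)) · L_m^{-α-1}(-x)`, as an identity for all real `x`. -/
theorem typeIII_deriv_rep (α : ℝ) (m k : ℕ) (hm : 0 < m) (hk : 0 < k) (x : ℝ) :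
    deriv (LIII α m k) x
      = (-x * lagZ (α + 3) ((k : ℤ) - 3) x + (α + 2 - x) * lagZ (α + 2) ((k : ℤ) - 2) x
          + ((m : ℝ) + 1) * lag (α + 1) (k - 1) x) * lag (-α - 1) m (-x) := by
  obtain ⟨m', rfl⟩ : ∃ m', m = m' + 1 := ⟨m - 1, by omega⟩
  -- derivative of the D-factor, used in both cases
  have hD : HasDerivAt (fun y => lag (-α - 2) (m' + 1 + 1) (-y)) (lag (-α - 1) (m' + 1) (-x)) x := by
    have h := hasDerivAt_lag_neg (-α - 2) (m' + 1 + 1) x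
    rw [show (-α - 2 + 1 : ℝ) = -α - 1 by ring] at h
    have hz : lagZ (-α - 1) (((m' + 1 + 1 : ℕ) : ℤ) - 1) (-x) = lag (-α - 1) (m' + 1) (-x) := by
      have : ((m' + 1 + 1 : ℕ) : ℤ) - 1 = ((m' + 1 : ℕ) : ℤ) := by push_cast; ring
      rw [this, lagZ_coe]
    rwa [hz] at h
  rcases k with _ | _ | j
  · omega
  · -- k = 1
    have hfun : LIII α (m' + 1) 1 = fun y => ((m' : ℝ) + 1 + 1) * lag (-α - 2) (m' + 1 + 1) (-y) := by
      funext y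
      have h1 : ((1 : ℕ) : ℤ) - 2 = (-1 : ℤ) := by norm_num
      simp [LIII, h1, lagZ, lag_zero]
    rw [hfun, (hD.const_mul ((m' : ℝ) + 1 + 1)).deriv]
    have h2 : ((1 : ℕ) : ℤ) - 3 = (-2 : ℤ) := by norm_num
    have h3 : ((1 : ℕ) : ℤ) - 2 = (-1 : ℤ) := by norm_num
    rw [h2, h3]
    simp [lagZ, lag_zero]
  · -- k = j + 2
    have hfun : LIII α (m' + 1) (j + 1 + 1) = fun y =>
        y * lag (α + 2) j y * lag (-α - 1) (m' + 1) (-y)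
          + ((m' : ℝ) + 1 + 1) * lag (α + 1) (j + 1) y * lag (-α - 2) (m' + 1 + 1) (-y) := by
      funext y
      have h1 : ((j + 1 + 1 : ℕ) : ℤ) - 2 = ((j : ℕ) : ℤ) := by push_cast; ring
      have h2 : (j + 1 + 1 : ℕ) - 1 = j + 1 := by omega
      simp only [LIII, h2]
      rw [h1, lagZ_coe]
      push_cast
      ring
    have hA : HasDerivAt (lag (α + 2) j) (-(lagZ (α + 3) ((j : ℤ) - 1) x)) x := by
      have h := hasDerivAt_lag (α + 2) j x
      rwa [show (α + 2 + 1 : ℝ) = α + 3 by ring] at h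
    have hB : HasDerivAt (fun y => lag (-α - 1) (m' + 1) (-y)) (lag (-α) m' (-x)) x := by
      have h := hasDerivAt_lag_neg (-α - 1) (m' + 1) x
      rw [show (-α - 1 + 1 : ℝ) = -α by ring] at h
      have hz : lagZ (-α) (((m' + 1 : ℕ) : ℤ) - 1) (-x) = lag (-α) m' (-x) := by
        have : ((m' + 1 : ℕ) : ℤ) - 1 = ((m' : ℕ) : ℤ) := by push_cast; ring
        rw [this, lagZ_coe]
      rwa [hz] at h
    have hC : HasDerivAt (lag (α + 1) (j + 1)) (-(lag (α + 2) j x)) x := by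
      have h := hasDerivAt_lag (α + 1) (j + 1) x
      rw [show (α + 1 + 1 : ℝ) = α + 2 by ring] at h
      have hz : lagZ (α + 2) (((j + 1 : ℕ) : ℤ) - 1) x = lag (α + 2) j x := by
        have : ((j + 1 : ℕ) : ℤ) - 1 = ((j : ℕ) : ℤ) := by push_cast; ring
        rw [this, lagZ_coe]
      rwa [hz] at h
    have h1 : HasDerivAt (fun y => y * lag (α + 2) j y)
        (1 * lag (α + 2) j x + x * (-(lagZ (α + 3) ((j : ℤ) - 1) x))) x :=
      (hasDerivAt_id x).mul hA
    have h2 := h1.mul hB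
    have h3 := (hC.const_mul ((m' : ℝ) + 1 + 1)).mul hD
    have htot : HasDerivAt (fun y => y * lag (α + 2) j y * lag (-α - 1) (m' + 1) (-y)
        + ((m' : ℝ) + 1 + 1) * lag (α + 1) (j + 1) y * lag (-α - 2) (m' + 1 + 1) (-y)) _ x := h2.add h3
    rw [hfun, htot.deriv]
    have e1 : ((j + 1 + 1 : ℕ) : ℤ) - 3 = ((j : ℕ) : ℤ) - 1 := by push_cast; ring
    have e2 : ((j + 1 + 1 : ℕ) : ℤ) - 2 = ((j : ℕ) : ℤ) := by push_cast; ring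
    have e3 : (j + 1 + 1 : ℕ) - 1 = j + 1 := by omega
    rw [e1, e2, e3]
    rw [lagZ_coe]
    have hKI := lag_KI α (-x) m'
    push_cast at hKI ⊢
    linear_combination (-(lag (α + 2) j x)) * hKI
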